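/- For 0 < θ, φ < π/2 and integer k ≥ 0, the full end-of-string rejection probability formula holds: with ψ_j = cos^j(φ)cos(θ)·e₀ + sin(θ)·e₁ and U_$ the 4×4 unitary (1/√C_k)·[[0, A_k†], [A_k, 0]] (in the ordered basis (e₀, e₁, e_acc, e_rej)) where A_k = [[cos^k φ cos θ, sin θ], [−sin θ, cos^k φ cos θ]] and C_k = cos^{2k}φ cos²θ + sin²θ, the squared norm of the e_rej-component of U_$·ψ_j equals C_k^{-1}·((cos^k φ − cos^j φ)·cos θ·sin θ)². -/
import Mathlib


open Real Matrix

theorem rejection_probability_formula (θ φ : ℝ) (k : ℕ)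
    (hθ : 0 < θ) (hθ' : θ < π / 2) (hφ : 0 < φ) (hφ' : φ < π / 2) :
    let C : ℝ := cos φ ^ (2 * k) * cos θ ^ 2 + sin θ ^ 2
    let Udollar : Matrix (Fin 4) (Fin 4) ℝ :=
      (1 / Real.sqrt C) •
        !![0, 0, cos φ ^ k * cos θ, -sin θ;
           0, 0, sin θ, cos φ ^ k * cos θ;
           cos φ ^ k * cos θ, sin θ, 0, 0;
           -sin θ, cos φ ^ k * cos θ, 0, 0]
    ∀ j : ℕ,
      let ψ : Fin 4 → ℝ := ![cos φ ^ j * cos θ, sin θ, 0, 0]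
      (Udollar.mulVec ψ 3) ^ 2 =
        C⁻¹ * ((cos φ ^ k - cos φ ^ j) * cos θ * sin θ) ^ 2 := by
  intro C Udollar j ψ
  have hC : 0 < C := by
    have := Real.sin_pos_of_pos_of_lt_pi hθ (lt_trans hθ' (by linarith [Real.pi_pos]))
    have hs2 : 0 < sin θ ^ 2 := pow_pos this 2
    have : 0 ≤ cos φ ^ (2 * k) * cos θ ^ 2 := by
      rw [pow_mul]; positivity
    simp only [C]; linarith
  have hsq : Real.sqrt C ^ 2 = C := Real.sq_sqrt hC.le
  have hspos : 0 < Real.sqrt C := Real.sqrt_pos.mpr hC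
  have hmv : Udollar.mulVec ψ 3 =
      (1 / Real.sqrt C) * ((cos φ ^ k - cos φ ^ j) * cos θ * sin θ) := by
    simp [Udollar, ψ, mulVec, dotProduct, Fin.sum_univ_four]
    ring
  rw [hmv, mul_pow, div_pow, one_pow, hsq, div_mul_eq_mul_div, one_mul,
    div_eq_inv_mul]
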